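/- For ν not a negative integer, J_ν(z) = (z/2)^ν/Γ(ν+1) · (1+θ) where |θ| ≤ exp(|z|²/(4|ν₀+1|)) − 1, and |ν₀+1| denotes the minimum of |ν+1|, |ν+2|, |ν+3|, …. -/

import Mathlib

open Complex MeasureTheory Real Filter ComplexConjugate

/-- Bessel function of the first kind, defined by its power series. -/
noncomputable def besselJ (ν z : ℂ) : ℂ :=
  ∑' n : ℕ, ((-1 : ℂ) ^ n * (z / 2) ^ (ν + 2 * (n : ℂ))) /
    ((n.factorial : ℂ) * Complex.Gamma (ν + (n : ℂ) + 1))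

/-- The product Bessel function `J_{μ,m}(z) = J_{−μ−m/2}(z) · J_{−μ+m/2}(z̄)`. -/
noncomputable def besselJC (μ : ℂ) (m : ℤ) (z : ℂ) : ℂ :=
  besselJ (-μ - (m : ℂ) / 2) z * besselJ (-μ + (m : ℂ) / 2) (conj z)

/-- The Bessel function `𝕁_{μ,m}` for `SL₂(ℂ)`. -/
noncomputable def JJ (μ : ℂ) (m : ℤ) (z : ℂ) : ℂ :=
  if Even m then
    (besselJC μ m z - besselJC (-μ) (-m) z) / Complex.sin ((Real.pi : ℂ) * μ)
  else
    (besselJC μ m z + besselJC (-μ) (-m) z) / (Complex.I * Complex.cos ((Real.pi : ℂ) * μ))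

/-- The Wirtinger derivative `∂/∂z = (∂/∂x − i ∂/∂y)/2`. -/
noncomputable def wdz (f : ℂ → ℂ) (z : ℂ) : ℂ :=
  (fderiv ℝ f z 1 - Complex.I * fderiv ℝ f z Complex.I) / 2

/-- The conjugate Wirtinger derivative `∂/∂z̄ = (∂/∂x + i ∂/∂y)/2`. -/
noncomputable def wdzbar (f : ℂ → ℂ) (z : ℂ) : ℂ :=
  (fderiv ℝ f z 1 + Complex.I * fderiv ℝ f z Complex.I) / 2

/-- The operator `∇ = (z ∂/∂z)² + z²`. -/
noncomputable def nabla (f : ℂ → ℂ) (z : ℂ) : ℂ :=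
  z * wdz (fun w => w * wdz f w) z + z ^ 2 * f z

/-- The operator `∇̄ = (z̄ ∂/∂z̄)² + z̄²`. -/
noncomputable def nablaBar (f : ℂ → ℂ) (z : ℂ) : ℂ :=
  conj z * wdzbar (fun w => conj w * wdzbar f w) z + (conj z) ^ 2 * f z

/-- `|ν₀ + 1| = min {|ν+1|, |ν+2|, |ν+3|, …}`. -/
noncomputable def nuZero (ν : ℂ) : ℝ := ⨅ n : ℕ, ‖ν + (n : ℂ) + 1‖

section Aux
variable {ν : ℂ} (hν : ∀ n : ℕ, ν ≠ -((n : ℂ) + 1))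

lemma hnu0 (hν : ∀ n : ℕ, ν ≠ -((n : ℂ) + 1)) : ∀ k : ℕ, ν + (k : ℂ) + 1 ≠ 0 := by
  intro k h
  exact hν k (by linear_combination h)

lemma hGamma_ne (hν : ∀ n : ℕ, ν ≠ -((n : ℂ) + 1)) :
    ∀ n : ℕ, Complex.Gamma (ν + (n : ℂ) + 1) ≠ 0 := by
  intro n
  apply Complex.Gamma_ne_zero
  intro m h
  apply hν (n + m)
  push_cast at h ⊢
  linear_combination h

lemma gamma_prod (hν : ∀ n : ℕ, ν ≠ -((n : ℂ) + 1)) (n : ℕ) :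
    Complex.Gamma (ν + (n : ℂ) + 1) =
      Complex.Gamma (ν + 1) * ∏ k ∈ Finset.range n, (ν + (k : ℂ) + 1) := by
  induction n with
  | zero => simp
  | succ n ih =>
    have h : (ν + ((n + 1 : ℕ) : ℂ) + 1) = (ν + (n : ℂ) + 1) + 1 := by push_cast; ring
    rw [h, Complex.Gamma_add_one _ (hnu0 hν n), ih, Finset.prod_range_succ]
    ring

lemma nuZero_le (ν : ℂ) (n : ℕ) : nuZero ν ≤ ‖ν + (n : ℂ) + 1‖ := by
  apply ciInf_le ⟨0, ?_⟩ n
  rintro y ⟨k, rfl⟩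
  exact norm_nonneg _

lemma nuZero_pos (hν : ∀ n : ℕ, ν ≠ -((n : ℂ) + 1)) : 0 < nuZero ν := by
  set N := ⌈‖ν‖⌉₊ with hN
  have hne : ((Finset.range (N + 1)).image fun k : ℕ => ‖ν + (k : ℂ) + 1‖).Nonempty :=
    Finset.Nonempty.image (by simp) _
  set b : ℝ := min 1 (Finset.min' _ hne) with hb
  have hbpos : 0 < b := by
    apply lt_min one_pos
    obtain ⟨k, _, hk⟩ := Finset.mem_image.mp (Finset.min'_mem _ hne)
    rw [← hk]
    exact norm_pos_iff.mpr (hnu0 hν k)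
  refine lt_of_lt_of_le hbpos (le_ciInf fun n => ?_)
  rcases le_or_gt n N with h | h
  · refine le_trans (min_le_right _ _) (Finset.min'_le _ _ ?_)
    exact Finset.mem_image.mpr ⟨n, Finset.mem_range.mpr (by omega), rfl⟩
  · refine le_trans (min_le_left _ _) ?_
    have h1 : ‖(ν + (n : ℂ) + 1) + (-ν)‖ ≤
        ‖ν + (n : ℂ) + 1‖ + ‖-ν‖ := norm_add_le _ _
    have h2 : ‖(ν + (n : ℂ) + 1) + (-ν)‖ = n + 1 := by
      have he : (ν + (n : ℂ) + 1) + (-ν) = ((n : ℝ) + 1 : ℝ) := by push_cast; ring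
      rw [he, Complex.norm_real, Real.norm_eq_abs]
      exact abs_of_nonneg (by positivity)
    have h3 : ‖ν‖ ≤ N := Nat.le_ceil _
    have h4 : (N : ℝ) < n := by exact_mod_cast h
    rw [norm_neg] at h1
    linarith
end Aux

/-- `J_ν(z) = (z/2)^ν/Γ(ν+1) · (1+θ)` with
`|θ| ≤ exp(|z|²/(4|ν₀+1|)) − 1`. -/
theorem besselJ_leading_term (ν : ℂ) (hν : ∀ n : ℕ, ν ≠ -((n : ℂ) + 1)) (z : ℂ) :
    ∃ θ : ℂ, besselJ ν z = (z / 2) ^ ν / Complex.Gamma (ν + 1) * (1 + θ) ∧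
      ‖θ‖ ≤ Real.exp (‖z‖ ^ 2 / (4 * nuZero ν)) - 1 := by
  have hΓ := hGamma_ne hν
  have hΓ1 : Complex.Gamma (ν + 1) ≠ 0 := by simpa using hΓ 0
  have hc : 0 < nuZero ν := nuZero_pos hν
  set c := nuZero ν
  rcases eq_or_ne z 0 with rfl | hz
  · refine ⟨0, ?_, by simp⟩
    have h0 : besselJ ν 0 = (0 / 2 : ℂ) ^ ν / Complex.Gamma (ν + 1) := by
      rw [besselJ, tsum_eq_single 0]
      · simp
      · intro n hn
        have he : ν + 2 * (n : ℂ) ≠ 0 := by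
          intro h
          apply hν (2 * n - 1)
          have : ((2 * n - 1 : ℕ) : ℂ) = 2 * n - 1 := by
            push_cast [Nat.cast_sub (by omega : 1 ≤ 2 * n)]; ring
          rw [this]
          linear_combination h
        simp [Complex.zero_cpow he]
    rw [h0]; ring
  -- main case
  have hz2 : (z / 2 : ℂ) ≠ 0 := div_ne_zero hz two_ne_zero
  set a : ℕ → ℂ := fun n => (-1) ^ n * (z ^ 2 / 4) ^ n * Complex.Gamma (ν + 1) /
    ((n.factorial : ℂ) * Complex.Gamma (ν + (n : ℂ) + 1)) with ha
  have key : ∀ n : ℕ, ((-1 : ℂ) ^ n * (z / 2) ^ (ν + 2 * (n : ℂ))) /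
      ((n.factorial : ℂ) * Complex.Gamma (ν + (n : ℂ) + 1)) =
      (z / 2) ^ ν / Complex.Gamma (ν + 1) * a n := by
    intro n
    have hw : (z / 2) ^ (ν + 2 * (n : ℂ)) = (z / 2) ^ ν * (z ^ 2 / 4) ^ n := by
      rw [Complex.cpow_add _ _ hz2]
      congr 1
      have h2n : (2 * (n : ℂ)) = ((2 * n : ℕ) : ℂ) := by push_cast; ring
      rw [h2n, Complex.cpow_natCast, pow_mul]
      norm_num [div_pow]
    have hfac : ((n.factorial : ℂ)) ≠ 0 := Nat.cast_ne_zero.mpr n.factorial_ne_zero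
    rw [hw]
    simp only [ha]
    rw [div_mul_div_comm, div_eq_div_iff (mul_ne_zero hfac (hΓ n))
      (mul_ne_zero hΓ1 (mul_ne_zero hfac (hΓ n)))]
    ring
  set x : ℝ := ‖z‖ ^ 2 / (4 * c) with hx
  have habs : ∀ n : ℕ, ‖a n‖ ≤ x ^ n / n.factorial := by
    intro n
    have hPpos : 0 < ∏ k ∈ Finset.range n, ‖ν + (k : ℂ) + 1‖ :=
      Finset.prod_pos fun k _ => norm_pos_iff.mpr (hnu0 hν k)
    have hcn : c ^ n ≤ ∏ k ∈ Finset.range n, ‖ν + (k : ℂ) + 1‖ := by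
      calc c ^ n = ∏ _k ∈ Finset.range n, c := by
            rw [Finset.prod_const, Finset.card_range]
        _ ≤ _ := Finset.prod_le_prod (fun _ _ => hc.le) (fun k _ => nuZero_le ν k)
    have heq : ‖a n‖ = (‖z‖ ^ 2 / 4) ^ n /
        ((n.factorial : ℝ) * ∏ k ∈ Finset.range n, ‖ν + (k : ℂ) + 1‖) := by
      have hG1 : ‖Complex.Gamma (ν + 1)‖ ≠ 0 := by
        simpa using hΓ1
      simp only [ha, gamma_prod hν n, norm_div, norm_mul, norm_pow, norm_neg, norm_one,
        one_pow, one_mul, Complex.norm_natCast, norm_prod, Complex.norm_ofNat]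
      field_simp
    rw [heq]
    have hxeq : x ^ n / n.factorial = (‖z‖ ^ 2 / 4) ^ n /
        ((n.factorial : ℝ) * c ^ n) := by
      have hx2 : x = (‖z‖ ^ 2 / 4) / c := by rw [hx]; ring
      rw [hx2, div_pow]
      ring
    rw [hxeq]
    have h0c : 0 < c ^ n := pow_pos hc n
    gcongr
  have hsum : Summable a :=
    Summable.of_norm_bounded (Real.summable_pow_div_factorial x)
      (fun n => by exact habs n)
  refine ⟨∑' n : ℕ, a (n + 1), ?_, ?_⟩
  · have h1 : besselJ ν z = ∑' n : ℕ, (z / 2) ^ ν / Complex.Gamma (ν + 1) * a n := by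
      rw [besselJ]; exact tsum_congr key
    rw [h1, tsum_mul_left, Summable.tsum_eq_zero_add hsum]
    have ha0 : a 0 = 1 := by
      rw [ha]; simp [div_self hΓ1]
    rw [ha0]
  · have hg : Summable (fun n : ℕ => x ^ n / n.factorial) :=
      Real.summable_pow_div_factorial x
    have hg1 : Summable (fun n : ℕ => x ^ (n + 1) / (n + 1).factorial) := by
      exact hg.comp_injective (add_left_injective 1)
    have hsn : Summable (fun n : ℕ => ‖a (n + 1)‖) := by
      apply hg1.of_nonneg_of_le (fun n => norm_nonneg _)
        (fun n => habs (n + 1))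
    have hb1 : ‖∑' n : ℕ, a (n + 1)‖ ≤ ∑' n : ℕ, ‖a (n + 1)‖ := by
      simpa using
        norm_tsum_le_tsum_norm (f := fun n : ℕ => a (n + 1))
          (by simpa using hsn)
    have hb2 : ∑' n : ℕ, ‖a (n + 1)‖ ≤ ∑' n : ℕ, x ^ (n + 1) / (n + 1).factorial :=
      Summable.tsum_le_tsum (fun n => habs (n + 1)) hsn hg1
    have hb3 : ∑' n : ℕ, x ^ (n + 1) / ((n + 1).factorial : ℝ) = Real.exp x - 1 := by
      have he : Real.exp x = ∑' n : ℕ, x ^ n / n.factorial := by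
        rw [Real.exp_eq_exp_ℝ, NormedSpace.exp_eq_tsum_div]
      rw [he, Summable.tsum_eq_zero_add hg]
      simp
    linarith
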